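/- Let Φ(y) = (2π)^{−1/2} ∫_{−∞}^{y} e^{−t²/2} dt be the standard normal distribution function, and let q : (0,1) → ℝ be any function satisfying Φ(q(s)) = 1 − s for all s ∈ (0,1); then e^{q(s)} is the upper quantile function G^{-1}(1−s) of the standard lognormal distribution G(y) = Φ(log y). For every x > 0: lim_{s→0⁺} (2 log(1/s))^{1/2}·( (2 log(1/s))^{1/2}·( e^{q(s)} − e^{q(xs)} )·e^{−q(s)} − log x ) = −(log x)²/2 (the expression being taken for s small enough that xs ∈ (0,1)). -/

import Mathlib

open Filter Topology Set
open MeasureTheory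

set_option maxHeartbeats 1000000

noncomputable def gaussTail (y : ℝ) : ℝ := ∫ t in Set.Ioi y, Real.exp (-t ^ 2 / 2)

lemma gauss_eq (t : ℝ) : Real.exp (-t ^ 2 / 2) = Real.exp (-(1/2) * t ^ 2) := by ring_nf

lemma gauss_integrable : MeasureTheory.Integrable (fun t : ℝ => Real.exp (-t ^ 2 / 2)) := by
  simp only [gauss_eq]
  exact integrable_exp_neg_mul_sq (by norm_num)

lemma gauss_mul_integrable : MeasureTheory.Integrable (fun t : ℝ => t * Real.exp (-t ^ 2 / 2)) := by
  simp only [gauss_eq]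
  exact integrable_mul_exp_neg_mul_sq (by norm_num)

lemma gauss_total : ∫ t : ℝ, Real.exp (-t ^ 2 / 2) = Real.sqrt (2 * Real.pi) := by
  simp only [gauss_eq]
  rw [integral_gaussian]
  rw [show Real.pi / (1/2) = 2 * Real.pi by ring]

lemma gauss_tendsto_zero : Tendsto (fun t : ℝ => Real.exp (-t ^ 2 / 2)) atTop (𝓝 0) := by
  apply Real.tendsto_exp_atBot.comp
  apply Tendsto.atBot_div_const (by norm_num : (0:ℝ) < 2)
  apply tendsto_neg_atTop_atBot.comp
  exact tendsto_pow_atTop (by norm_num)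

lemma gauss_deriv (t : ℝ) :
    HasDerivAt (fun t : ℝ => -Real.exp (-t ^ 2 / 2)) (t * Real.exp (-t ^ 2 / 2)) t := by
  have h : HasDerivAt (fun t : ℝ => -t ^ 2 / 2) (-t) t := by
    have := ((hasDerivAt_pow 2 t).neg).div_const 2
    simpa using this.congr_deriv (by ring)
  have := (h.exp).neg
  exact this.congr_deriv (by ring)

lemma gauss_mul_integral {y : ℝ} :
    ∫ t in Set.Ioi y, t * Real.exp (-t ^ 2 / 2) = Real.exp (-y ^ 2 / 2) := by
  have := integral_Ioi_of_hasDerivAt_of_tendsto' (a := y) (f := fun t : ℝ => -Real.exp (-t ^ 2 / 2))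
    (fun t _ => gauss_deriv t) gauss_mul_integrable.integrableOn (gauss_tendsto_zero.neg)
  rw [this]; simp

lemma mill_upper {y : ℝ} (hy : 0 < y) : gaussTail y ≤ Real.exp (-y ^ 2 / 2) / y := by
  have h1 : gaussTail y ≤ ∫ t in Set.Ioi y, (t / y) * Real.exp (-t ^ 2 / 2) := by
    apply setIntegral_mono_on gauss_integrable.integrableOn
      ((gauss_mul_integrable.div_const y).integrableOn.congr_fun ?_ measurableSet_Ioi)
      measurableSet_Ioi
    · intro t ht
      have h2 : (1:ℝ) ≤ t / y := (one_le_div hy).2 (le_of_lt ht)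
      nlinarith [Real.exp_pos (-t ^ 2 / 2)]
    · intro t _; ring
  calc gaussTail y ≤ ∫ t in Set.Ioi y, (t / y) * Real.exp (-t ^ 2 / 2) := h1
    _ = (∫ t in Set.Ioi y, t * Real.exp (-t ^ 2 / 2)) / y := by
        rw [← integral_div]; congr 1; funext t; ring
    _ = Real.exp (-y ^ 2 / 2) / y := by rw [gauss_mul_integral]

noncomputable def millG (t : ℝ) : ℝ := -(t / (1 + t ^ 2) * Real.exp (-t ^ 2 / 2))

lemma millG_deriv (t : ℝ) :
    HasDerivAt millG (Real.exp (-t ^ 2 / 2) * ((t^4 + 2*t^2 - 1) / (1 + t ^ 2)^2)) t := by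
  have hne : (1 + t ^ 2) ≠ 0 := by positivity
  have h1 : HasDerivAt (fun t : ℝ => t / (1 + t ^ 2))
      ((1 * (1 + t^2) - t * (2 * t)) / (1 + t^2)^2) t := by
    exact (hasDerivAt_id t).div (by simpa using (hasDerivAt_pow 2 t).const_add 1) hne
  have h2 : HasDerivAt (fun t : ℝ => Real.exp (-t ^ 2 / 2)) (Real.exp (-t^2/2) * (-t)) t := by
    have h : HasDerivAt (fun t : ℝ => -t ^ 2 / 2) (-t) t := by
      have := ((hasDerivAt_pow 2 t).neg).div_const 2
      simpa using this.congr_deriv (by ring)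
    exact h.exp
  have := (h1.mul h2).neg
  apply this.congr_deriv
  field_simp
  ring

lemma millG_tendsto_zero : Tendsto millG atTop (𝓝 0) := by
  refine squeeze_zero_norm' ?_ gauss_tendsto_zero
  filter_upwards [eventually_ge_atTop (0:ℝ)] with t ht
  have h1 : 0 < 1 + t ^ 2 := by positivity
  have h2 : t / (1 + t ^ 2) ≤ 1 := by rw [div_le_one h1]; nlinarith
  have h3 : 0 ≤ t / (1 + t ^ 2) := by positivity
  have := Real.exp_pos (-t ^ 2 / 2)
  simp only [millG, norm_neg, Real.norm_eq_abs, abs_mul, abs_of_nonneg h3,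
    abs_of_pos this]
  nlinarith

lemma millG_deriv_integrable {y : ℝ} :
    IntegrableOn (fun t => Real.exp (-t ^ 2 / 2) * ((t^4 + 2*t^2 - 1) / (1 + t ^ 2)^2)) (Set.Ioi y) := by
  apply Integrable.mono' gauss_integrable.integrableOn
  · apply Continuous.aestronglyMeasurable
    apply Continuous.mul (by continuity)
    apply Continuous.div (by continuity) (by continuity)
    intro t; positivity
  · filter_upwards with t
    have h1 : (0:ℝ) < (1 + t ^ 2)^2 := by positivity
    have h2 : |(t^4 + 2*t^2 - 1) / (1 + t ^ 2)^2| ≤ 1 := by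
      rw [abs_div, abs_of_pos h1, div_le_one h1]
      rw [abs_le]; constructor <;> nlinarith
    have he := Real.exp_pos (-t ^ 2 / 2)
    rw [Real.norm_eq_abs, abs_mul, abs_of_pos he]
    nlinarith [abs_nonneg ((t^4 + 2*t^2 - 1) / (1 + t ^ 2)^2), he.le]

lemma mill_lower {y : ℝ} (hy : 0 < y) :
    y / (1 + y ^ 2) * Real.exp (-y ^ 2 / 2) ≤ gaussTail y := by
  have key : ∫ t in Set.Ioi y, Real.exp (-t ^ 2 / 2) * ((t^4 + 2*t^2 - 1) / (1 + t ^ 2)^2)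
      = y / (1 + y ^ 2) * Real.exp (-y ^ 2 / 2) := by
    rw [integral_Ioi_of_hasDerivAt_of_tendsto' (fun t _ => millG_deriv t)
      millG_deriv_integrable millG_tendsto_zero]
    simp [millG]
  rw [← key]
  apply setIntegral_mono_on millG_deriv_integrable gauss_integrable.integrableOn measurableSet_Ioi
  intro t _
  have h1 : (0:ℝ) < (1 + t ^ 2)^2 := by positivity
  have h2 : (t^4 + 2*t^2 - 1) / (1 + t ^ 2)^2 ≤ 1 := by rw [div_le_one h1]; nlinarith
  nlinarith [Real.exp_pos (-t ^ 2 / 2)]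

lemma gaussTail_pos {y : ℝ} (hy : 0 < y) : 0 < gaussTail y := by
  have := mill_lower hy
  have h1 : 0 < y / (1 + y ^ 2) * Real.exp (-y ^ 2 / 2) := by positivity
  linarith

lemma gaussTail_anti {y z : ℝ} (h : y ≤ z) : gaussTail z ≤ gaussTail y := by
  apply setIntegral_mono_set gauss_integrable.integrableOn
  · filter_upwards with t; positivity
  · exact HasSubset.Subset.eventuallyLE (Set.Ioi_subset_Ioi h)

lemma Phi_eq (Φ : ℝ → ℝ)
    (hΦ : ∀ y : ℝ, Φ y = (2 * Real.pi) ^ (-(1/2) : ℝ) * ∫ t in Set.Iic y, Real.exp (-t ^ 2 / 2))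
    (y : ℝ) : Φ y = 1 - (2 * Real.pi) ^ (-(1/2) : ℝ) * gaussTail y := by
  have h2π : (0:ℝ) < 2 * Real.pi := by positivity
  have hIic : (∫ t in Set.Iic y, Real.exp (-t ^ 2 / 2)) = Real.sqrt (2 * Real.pi) - gaussTail y := by
    have := intervalIntegral.integral_Iic_add_Ioi (f := fun t : ℝ => Real.exp (-t ^ 2 / 2)) (b := y) (μ := volume)
      gauss_integrable.integrableOn gauss_integrable.integrableOn
    rw [gauss_total] at this
    unfold gaussTail; linarith
  have hc : (2 * Real.pi) ^ (-(1/2) : ℝ) * Real.sqrt (2 * Real.pi) = 1 := by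
    rw [Real.sqrt_eq_rpow, ← Real.rpow_add h2π]
    norm_num
  rw [hΦ, hIic, mul_sub, hc]

lemma tail_eq (Φ : ℝ → ℝ)
    (hΦ : ∀ y : ℝ, Φ y = (2 * Real.pi) ^ (-(1/2) : ℝ) * ∫ t in Set.Iic y, Real.exp (-t ^ 2 / 2))
    (q : ℝ → ℝ) (hq : ∀ s ∈ Set.Ioo (0:ℝ) 1, Φ (q s) = 1 - s)
    {s : ℝ} (hs : s ∈ Set.Ioo (0:ℝ) 1) : gaussTail (q s) = Real.sqrt (2 * Real.pi) * s := by
  have h2π : (0:ℝ) < 2 * Real.pi := by positivity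
  have h1 := hq s hs
  rw [Phi_eq Φ hΦ] at h1
  have h2 : (2 * Real.pi) ^ (-(1/2) : ℝ) * gaussTail (q s) = s := by linarith
  have hc : Real.sqrt (2 * Real.pi) * (2 * Real.pi) ^ (-(1/2) : ℝ) = 1 := by
    rw [Real.sqrt_eq_rpow, ← Real.rpow_add h2π]; norm_num
  calc gaussTail (q s) = (Real.sqrt (2 * Real.pi) * (2 * Real.pi) ^ (-(1/2) : ℝ)) * gaussTail (q s) := by
        rw [hc, one_mul]
    _ = Real.sqrt (2 * Real.pi) * s := by rw [mul_assoc, h2]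

lemma q_tendsto (q : ℝ → ℝ)
    (hF : ∀ s ∈ Set.Ioo (0:ℝ) 1, gaussTail (q s) = Real.sqrt (2 * Real.pi) * s) :
    Tendsto q (𝓝[>] (0:ℝ)) atTop := by
  rw [tendsto_atTop]
  intro M
  set M' : ℝ := max M 1 with hM'
  have hM'pos : 0 < M' := lt_of_lt_of_le one_pos (le_max_right _ _)
  have hFM : 0 < gaussTail M' := gaussTail_pos hM'pos
  have h2π : (0:ℝ) < Real.sqrt (2 * Real.pi) := Real.sqrt_pos.2 (by positivity)
  have hmem : Set.Ioo (0:ℝ) (min 1 (gaussTail M' / Real.sqrt (2 * Real.pi))) ∈ 𝓝[>] (0:ℝ) := by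
    apply Ioo_mem_nhdsGT_of_mem
    constructor
    · rfl
    · positivity
  filter_upwards [hmem] with s hs
  have hs1 : s ∈ Set.Ioo (0:ℝ) 1 := ⟨hs.1, lt_of_lt_of_le hs.2 (min_le_left _ _)⟩
  by_contra hcon
  push_neg at hcon
  have hq : q s ≤ M' := le_trans hcon.le (le_max_left _ _)
  have h1 : gaussTail M' ≤ gaussTail (q s) := gaussTail_anti hq
  rw [hF s hs1] at h1
  have h2 : s < gaussTail M' / Real.sqrt (2 * Real.pi) := lt_of_lt_of_le hs.2 (min_le_right _ _)
  rw [lt_div_iff₀ h2π] at h2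
  linarith [mul_comm s (Real.sqrt (2 * Real.pi))]

lemma log_ratio_bound {a b : ℝ} (ha : 0 < a) (hb : 0 < b) :
    |Real.log b - Real.log a| ≤ |b - a| / min a b := by
  have key : ∀ u v : ℝ, 0 < u → u ≤ v → Real.log v - Real.log u ≤ (v - u) / u := by
    intro u v hu huv
    have hv : 0 < v := lt_of_lt_of_le hu huv
    have hvu : 0 < v / u := div_pos hv hu
    have h1 := Real.log_le_sub_one_of_pos hvu
    rw [Real.log_div hv.ne' hu.ne'] at h1
    have h2 : v / u - 1 = (v - u) / u := by field_simp
    linarith [h2 ▸ h1]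
  rcases le_total a b with h | h
  · rw [min_eq_left h, abs_of_nonneg (sub_nonneg.2 h),
      abs_of_nonneg (sub_nonneg.2 (Real.log_le_log ha h))]
    exact key a b ha h
  · rw [min_eq_right h, abs_of_nonpos (sub_nonpos.2 h),
      abs_of_nonpos (sub_nonpos.2 (Real.log_le_log hb h))]
    have := key b a hb h
    rw [neg_sub, neg_sub]
    linarith [this]

lemma cubic_exp_bound {u : ℝ} (h : |u| ≤ 1) : |Real.exp u - 1 - u - u^2/2| ≤ |u|^3 := by
  have h3 := Real.exp_bound h (n := 3) (by norm_num)
  have hs : (∑ m ∈ Finset.range 3, u ^ m / m.factorial) = 1 + u + u^2/2 := by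
    simp [Finset.sum_range_succ, Nat.factorial]
  rw [hs] at h3
  norm_num [Nat.factorial] at h3
  have h5 : Real.exp u - 1 - u - u^2/2 = Real.exp u - (1 + u + u^2/2) := by ring
  rw [h5]
  nlinarith [pow_nonneg (abs_nonneg u) 3]

lemma abs_squeeze {α : Type*} {l : Filter α} {f g : α → ℝ} (h : ∀ᶠ s in l, |f s| ≤ g s)
    (hg : Tendsto g l (𝓝 0)) : Tendsto f l (𝓝 0) :=
  squeeze_zero_norm' (by simpa [Real.norm_eq_abs] using h) hg

lemma main_calc {l : Filter ℝ} (a b r : ℝ → ℝ) (L : ℝ)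
    (ha : Tendsto a l atTop) (hb : Tendsto b l atTop)
    (hab : ∀ᶠ s in l, |L - ((b s)^2 - (a s)^2)/2 - (Real.log (b s) - Real.log (a s))|
      ≤ 1/(a s)^2 + 1/(b s)^2)
    (hlr : ∀ᶠ s in l, |Real.log (b s) - Real.log (a s)| ≤ |b s - a s| / min (a s) (b s))
    (hr : ∀ᶠ s in l, 0 ≤ r s ∧ (b s)^2 + 2*Real.log (b s) + Real.log (2*Real.pi) ≤ (r s)^2
      ∧ (r s)^2 ≤ (b s)^2 + 2*Real.log (b s) + Real.log (2*Real.pi) + 2/(b s)^2) :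
    Tendsto (fun s => r s * (r s * (1 - Real.exp (a s - b s)) - L)) l (𝓝 (-L^2/2)) := by
  set C : ℝ := 2*(|L|+1) with hC
  have hCpos : 0 < C := by positivity
  have ha2 : ∀ᶠ s in l, 2 ≤ a s := ha.eventually (eventually_ge_atTop 2)
  have hb2 : ∀ᶠ s in l, 2 ≤ b s := hb.eventually (eventually_ge_atTop 2)
  have hbinv : Tendsto (fun s => (b s)⁻¹) l (𝓝 0) := hb.inv_tendsto_atTop
  -- Step 1 : |b - a| ≤ C / b eventually
  have hdb : ∀ᶠ s in l, |b s - a s| ≤ C / b s := by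
    filter_upwards [ha2, hb2, hab, hlr] with s ha2 hb2 hab hlr
    have hap : (0:ℝ) < a s := by linarith
    have hbp : (0:ℝ) < b s := by linarith
    have hmin : (1:ℝ) ≤ min (a s) (b s) := le_min (by linarith) (by linarith)
    have h1 : |Real.log (b s) - Real.log (a s)| ≤ |b s - a s| := by
      calc |Real.log (b s) - Real.log (a s)| ≤ |b s - a s| / min (a s) (b s) := hlr
        _ ≤ |b s - a s| / 1 := by
            apply div_le_div_of_nonneg_left (abs_nonneg _) (by linarith) hmin
            
        _ = |b s - a s| := by rw [div_one]
    have h2 : 1/(a s)^2 + 1/(b s)^2 ≤ 1 := by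
      have : (4:ℝ) ≤ (a s)^2 := by nlinarith
      have : (4:ℝ) ≤ (b s)^2 := by nlinarith
      have e1 : 1/(a s)^2 ≤ 1/4 := by
        apply div_le_div_of_nonneg_left <;> norm_num <;> nlinarith
      have e2 : 1/(b s)^2 ≤ 1/4 := by
        apply div_le_div_of_nonneg_left <;> norm_num <;> nlinarith
      linarith
    have h3 : |L - ((b s)^2 - (a s)^2)/2| ≤ |b s - a s| + 1 := by
      have := abs_sub_abs_le_abs_sub (L - ((b s)^2 - (a s)^2)/2)
        (Real.log (b s) - Real.log (a s))
      calc |L - ((b s)^2 - (a s)^2)/2|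
          ≤ |L - ((b s)^2 - (a s)^2)/2 - (Real.log (b s) - Real.log (a s))|
            + |Real.log (b s) - Real.log (a s)| := by
            have := abs_add_le (L - ((b s)^2 - (a s)^2)/2 - (Real.log (b s) - Real.log (a s)))
              (Real.log (b s) - Real.log (a s))
            simpa using this
        _ ≤ (1/(a s)^2 + 1/(b s)^2) + |b s - a s| := add_le_add hab h1
        _ ≤ |b s - a s| + 1 := by linarith
    -- |b-a| * ((a+b)/2) ≤ |L| + |b-a| + 1
    have h4 : |b s - a s| * ((a s + b s)/2) = |((b s)^2 - (a s)^2)/2| := by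
      rw [← abs_of_nonneg (show (0:ℝ) ≤ (a s + b s)/2 by linarith), ← abs_mul]
      congr 1; ring
    have h5 : |((b s)^2 - (a s)^2)/2| ≤ |L| + |b s - a s| + 1 := by
      have := abs_sub (L) (((b s)^2 - (a s)^2)/2)
      have h6 : |((b s)^2 - (a s)^2)/2| - |L| ≤ |L - ((b s)^2 - (a s)^2)/2| := by
        rw [abs_sub_comm]
        exact abs_sub_abs_le_abs_sub _ _
      linarith
    have h7 : |b s - a s| * ((a s + b s)/2 - 1) ≤ |L| + 1 := by nlinarith [abs_nonneg (b s - a s)]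
    have h8 : b s / 2 ≤ (a s + b s)/2 - 1 := by linarith
    have h9 : |b s - a s| * (b s / 2) ≤ |L| + 1 := by
      have := mul_le_mul_of_nonneg_left h8 (abs_nonneg (b s - a s))
      linarith
    rw [le_div_iff₀ hbp]
    nlinarith
  have hd0 : Tendsto (fun s => b s - a s) l (𝓝 0) := by
    apply abs_squeeze (g := fun s => C * (b s)⁻¹)
    · filter_upwards [hdb] with s h
      simpa [Real.norm_eq_abs, div_eq_mul_inv] using h
    · simpa using hbinv.const_mul C
  have hdabs : Tendsto (fun s => |b s - a s|) l (𝓝 0) := by simpa using hd0.abs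
  -- Step 2 : refined bound |L - d(a+b)/2| ≤ 2|d|/b + 5/b^2
  have hθ : ∀ᶠ s in l, |L - (b s - a s)*((a s + b s))/2| ≤ 2*|b s - a s|/(b s) + 5/(b s)^2 := by
    filter_upwards [hb2, hab, hlr, hdb, hb.eventually (eventually_ge_atTop (2*C))]
      with s hb2 hab hlr hdb hbC
    have hbp : (0:ℝ) < b s := by linarith
    have hd1 : |b s - a s| ≤ 1 := by
      calc |b s - a s| ≤ C / b s := hdb
        _ ≤ 1 := by rw [div_le_one hbp]; linarith
    have hap : b s / 2 ≤ a s := by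
      have := abs_le.1 hd1
      linarith
    have hap0 : (0:ℝ) < a s := by linarith
    have hmin : b s / 2 ≤ min (a s) (b s) := le_min hap (by linarith)
    have hminpos : (0:ℝ) < min (a s) (b s) := lt_of_lt_of_le (by linarith) hmin
    have h1 : |Real.log (b s) - Real.log (a s)| ≤ 2*|b s - a s|/(b s) := by
      calc |Real.log (b s) - Real.log (a s)| ≤ |b s - a s| / min (a s) (b s) := hlr
        _ ≤ |b s - a s| / (b s / 2) := div_le_div_of_nonneg_left (abs_nonneg _) (by linarith) hmin
        _ = 2*|b s - a s|/(b s) := by field_simp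
    have h2 : 1/(a s)^2 + 1/(b s)^2 ≤ 5/(b s)^2 := by
      have e1 : (b s)^2/4 ≤ (a s)^2 := by nlinarith
      have e2 : 1/(a s)^2 ≤ 4/(b s)^2 := by
        rw [div_le_div_iff₀ (by positivity) (by positivity)]
        nlinarith
      linarith [e2, (by ring : (4:ℝ)/(b s)^2 + 1/(b s)^2 = 5/(b s)^2)]
    have key : (b s - a s)*((a s + b s))/2 = ((b s)^2 - (a s)^2)/2 := by ring
    rw [key]
    calc |L - ((b s)^2 - (a s)^2)/2|
        ≤ |L - ((b s)^2 - (a s)^2)/2 - (Real.log (b s) - Real.log (a s))|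
          + |Real.log (b s) - Real.log (a s)| := by
          have := abs_add_le (L - ((b s)^2 - (a s)^2)/2 - (Real.log (b s) - Real.log (a s)))
            (Real.log (b s) - Real.log (a s))
          simpa using this
      _ ≤ (1/(a s)^2 + 1/(b s)^2) + 2*|b s - a s|/(b s) := add_le_add hab h1
      _ ≤ 2*|b s - a s|/(b s) + 5/(b s)^2 := by linarith
  -- Step 3 : b*d → L
  have hbdL : Tendsto (fun s => b s * (b s - a s) - L) l (𝓝 0) := by
    apply abs_squeeze
      (g := fun s => 2*|b s - a s| *(b s)⁻¹ + 5*((b s)⁻¹*(b s)⁻¹) + (b s - a s)*(b s - a s)/2)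
    · filter_upwards [hb2, hθ] with s hb2 hθ
      have hbp : (0:ℝ) < b s := by linarith
      have h1 : |b s * (b s - a s) - (b s - a s)*((a s + b s))/2|
          = |b s - a s| * |b s - a s| / 2 := by
        rw [← abs_mul]
        rw [show b s * (b s - a s) - (b s - a s)*((a s + b s))/2
          = (b s - a s) * (b s - a s) / 2 by ring]
        rw [abs_div]
        norm_num
      have h2 : |b s * (b s - a s) - L| ≤ |b s * (b s - a s) - (b s - a s)*((a s + b s))/2|
          + |(b s - a s)*((a s + b s))/2 - L| := abs_sub_le _ _ _
      rw [abs_sub_comm ((b s - a s)*((a s + b s))/2) L] at h2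
      have h3 : 2*|b s - a s|/(b s) = 2*|b s - a s| *(b s)⁻¹ := by ring
      have h4 : 5/(b s)^2 = 5*((b s)⁻¹*(b s)⁻¹) := by
        rw [pow_two]; field_simp
      have h5 : |b s - a s| * |b s - a s| = (b s - a s)*(b s - a s) := by
        rw [← abs_mul, abs_of_nonneg (mul_self_nonneg _)]
      calc |b s * (b s - a s) - L|
          ≤ |b s - a s| * |b s - a s| / 2 + (2*|b s - a s|/(b s) + 5/(b s)^2) := by
            rw [← h1]; linarith
        _ = 2*|b s - a s| *(b s)⁻¹ + 5*((b s)⁻¹*(b s)⁻¹) + (b s - a s)*(b s - a s)/2 := by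
            rw [← h3, ← h4, h5]; ring
    · have t1 : Tendsto (fun s => 2*|b s - a s| *(b s)⁻¹) l (𝓝 0) := by
        simpa using ((hdabs.const_mul 2).mul hbinv)
      have t2 : Tendsto (fun s => 5*((b s)⁻¹*(b s)⁻¹)) l (𝓝 0) := by
        simpa using ((hbinv.mul hbinv).const_mul 5)
      have t3 : Tendsto (fun s => (b s - a s)*(b s - a s)/2) l (𝓝 0) := by
        simpa using ((hd0.mul hd0).div_const 2)
      simpa using (t1.add t2).add t3
  have hbd : Tendsto (fun s => b s * (b s - a s)) l (𝓝 L) := by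
    have := hbdL.add_const L
    simpa using this
  -- Step 4 : r facts
  have hlogb : Tendsto (fun s => Real.log (b s)) l atTop := Real.tendsto_log_atTop.comp hb
  have hlb : Tendsto (fun s => Real.log (b s) / b s) l (𝓝 0) := by
    have := Real.isLittleO_log_id_atTop.tendsto_div_nhds_zero.comp hb
    exact this
  have hrfacts : ∀ᶠ s in l, 0 ≤ r s ∧ b s ≤ r s ∧ r s * (r s - b s) ≤ 3*Real.log (b s)
      ∧ r s - b s ≤ 3*Real.log (b s)/(2*b s) := by
    filter_upwards [hb2, hr, hlogb.eventually (eventually_ge_atTop (Real.log (2*Real.pi) + 1))]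
      with s hb2 hr hlogb
    obtain ⟨hr0, hr1, hr2⟩ := hr
    have hbp : (0:ℝ) < b s := by linarith
    have h2π : 0 ≤ Real.log (2*Real.pi) := Real.log_nonneg (by nlinarith [Real.pi_gt_three])
    have hlogb0 : 0 ≤ Real.log (b s) := by linarith
    have hbr : b s ≤ r s := by
      have h1 : (b s)^2 ≤ (r s)^2 := by nlinarith
      have := Real.sqrt_le_sqrt h1
      rwa [Real.sqrt_sq (by linarith), Real.sqrt_sq hr0] at this
    have hb2inv : 2/(b s)^2 ≤ 1 := by
      rw [div_le_one (by positivity)]; nlinarith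
    have hup : (r s)^2 - (b s)^2 ≤ 3*Real.log (b s) := by nlinarith
    refine ⟨hr0, hbr, ?_, ?_⟩
    · nlinarith
    · rw [sub_le_iff_le_add, div_add' _ _ _ (by positivity : (2*b s) ≠ 0)]
      rw [le_div_iff₀ (by positivity)]
      nlinarith
  have hrmb : Tendsto (fun s => r s - b s) l (𝓝 0) := by
    apply abs_squeeze (g := fun s => (3/2)*(Real.log (b s)/(b s)))
    · filter_upwards [hrfacts, hb2] with s hf hb2
      obtain ⟨hr0, hbr, _, h4⟩ := hf
      rw [abs_of_nonneg (by linarith)]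
      calc r s - b s ≤ 3*Real.log (b s)/(2*b s) := h4
        _ = (3/2)*(Real.log (b s)/(b s)) := by ring
    · simpa using hlb.const_mul (3/2 : ℝ)
  -- Step 5 : r*d → L
  have hrd : Tendsto (fun s => r s * (b s - a s)) l (𝓝 L) := by
    have h1 : Tendsto (fun s => b s * (b s - a s) + (r s - b s) * (b s - a s)) l (𝓝 (L + 0)) :=
      hbd.add (by simpa using hrmb.mul hd0)
    have h2 : ∀ s, r s * (b s - a s) = b s * (b s - a s) + (r s - b s) * (b s - a s) := by
      intro s; ring
    rw [show L = L + 0 by ring]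
    exact h1.congr (fun s => (h2 s).symm)
  -- Step 6 : r*(r*d - L) → 0
  have hterm1 : Tendsto (fun s => r s * (r s * (b s - a s) - L)) l (𝓝 0) := by
    have hA1 : Tendsto (fun s => (r s * (r s - b s)) * (b s - a s)) l (𝓝 0) := by
      apply abs_squeeze (g := fun s => (3*C)*(Real.log (b s)/(b s)))
      · filter_upwards [hrfacts, hdb, hb2] with s hf hdb hb2
        obtain ⟨hr0, hbr, h3, _⟩ := hf
        have hbp : (0:ℝ) < b s := by linarith
        have hrrb0 : 0 ≤ r s * (r s - b s) := mul_nonneg hr0 (by linarith)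
        have hlogb0 : 0 ≤ Real.log (b s) := by nlinarith [h3, hrrb0]
        rw [abs_mul, abs_of_nonneg hrrb0]
        calc r s * (r s - b s) * |b s - a s| ≤ (3*Real.log (b s)) * (C / b s) := by
              apply mul_le_mul h3 hdb (abs_nonneg _) (by positivity)
          _ = (3*C)*(Real.log (b s)/(b s)) := by ring
      · simpa using hlb.const_mul (3*C)
    have hA2 : Tendsto (fun s => r s * (b s * (b s - a s) - L)) l (𝓝 0) := by
      apply abs_squeeze (g := fun s => (b s + 1) *
        (2* |b s - a s| /(b s) + 5/(b s)^2 + (b s - a s)*(b s - a s)/2))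
      · filter_upwards [hrfacts, hb2, hθ,
          hrmb.eventually (eventually_le_nhds (by norm_num : (0:ℝ) < 1))] with s hf hb2 hθ hrmb1
        obtain ⟨hr0, hbr, _, h4⟩ := hf
        have hbp : (0:ℝ) < b s := by linarith
        have hr1 : r s ≤ b s + 1 := by linarith
        have h5 : |b s * (b s - a s) - L| ≤ 2* |b s - a s| /(b s) + 5/(b s)^2
            + (b s - a s)*(b s - a s)/2 := by
          have h6 : |b s * (b s - a s) - (b s - a s)*((a s + b s))/2|
              = (b s - a s)*(b s - a s)/2 := by
            rw [show b s * (b s - a s) - (b s - a s)*((a s + b s))/2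
              = (b s - a s) * (b s - a s) / 2 by ring, abs_div, abs_of_nonneg (mul_self_nonneg _)]
            norm_num
          have h7 := abs_sub_le (b s * (b s - a s)) ((b s - a s)*((a s + b s))/2) L
          rw [h6] at h7
          rw [abs_sub_comm ((b s - a s)*((a s + b s))/2) L] at h7
          linarith
        rw [abs_mul, abs_of_nonneg hr0]
        exact mul_le_mul hr1 h5 (abs_nonneg _) (by linarith)
      · -- the bound tends to 0
        have hev : ∀ᶠ s in l, (b s + 1) *
            (2* |b s - a s| /(b s) + 5/(b s)^2 + (b s - a s)*(b s - a s)/2)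
            = 2* |b s - a s| + 2* |b s - a s| *(b s)⁻¹ + 5*(b s)⁻¹ + 5*((b s)⁻¹*(b s)⁻¹)
              + (b s * (b s - a s))*(b s - a s)/2 + (b s - a s)*(b s - a s)/2 := by
          filter_upwards [hb2] with s hb2
          have hbp : (b s) ≠ 0 := by intro h; rw [h] at hb2; linarith
          field_simp
          ring
        have ht : Tendsto (fun s => 2* |b s - a s| + 2* |b s - a s| *(b s)⁻¹ + 5*(b s)⁻¹
            + 5*((b s)⁻¹*(b s)⁻¹) + (b s * (b s - a s))*(b s - a s)/2
            + (b s - a s)*(b s - a s)/2) l (𝓝 0) := by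
          have t1 := hdabs.const_mul (2:ℝ)
          have t2 := (hdabs.const_mul (2:ℝ)).mul hbinv
          have t3 := hbinv.const_mul (5:ℝ)
          have t4 := (hbinv.mul hbinv).const_mul (5:ℝ)
          have t5 := (hbd.mul hd0).div_const 2
          have t6 := (hd0.mul hd0).div_const 2
          have := ((((t1.add t2).add t3).add t4).add t5).add t6
          simpa using this
        apply Tendsto.congr' ?_ ht
        filter_upwards [hev] with s h
        exact h.symm
    have heq : ∀ s, r s * (r s * (b s - a s) - L)
        = (r s * (r s - b s)) * (b s - a s) + r s * (b s * (b s - a s) - L) := by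
      intro s; ring
    have := hA1.add hA2
    rw [show (0:ℝ) = 0 + 0 by ring]
    exact this.congr (fun s => (heq s).symm)
  -- Step 7 : r^2 * (exp(-d) - 1 + d) → L^2/2
  have hterm2 : Tendsto (fun s => (r s)^2 * (Real.exp (-(b s - a s)) - 1 + (b s - a s))) l
      (𝓝 (L*L/2)) := by
    have hmain : Tendsto (fun s => (r s * (b s - a s)) * (r s * (b s - a s)) / 2) l (𝓝 (L*L/2)) :=
      (hrd.mul hrd).div_const 2
    have hrho : Tendsto (fun s => (r s)^2 * (Real.exp (-(b s - a s)) - 1 + (b s - a s)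
        - (b s - a s)^2/2)) l (𝓝 0) := by
      apply abs_squeeze (g := fun s => (r s * (b s - a s))^2 * |b s - a s|)
      · filter_upwards [hrfacts,
          hdabs.eventually (eventually_le_nhds (by norm_num : (0:ℝ) < 1))] with s hf hd1
        obtain ⟨hr0, _, _, _⟩ := hf
        have h1 : |Real.exp (-(b s - a s)) - 1 + (b s - a s) - (b s - a s)^2/2|
            ≤ |b s - a s|^3 := by
          have h2 := cubic_exp_bound (u := -(b s - a s)) (by rwa [abs_neg])
          rw [abs_neg] at h2
          calc |Real.exp (-(b s - a s)) - 1 + (b s - a s) - (b s - a s)^2/2|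
              = |Real.exp (-(b s - a s)) - 1 - (-(b s - a s)) - (-(b s - a s))^2/2| := by
                congr 1; ring
            _ ≤ |b s - a s|^3 := h2
        rw [abs_mul, abs_of_nonneg (sq_nonneg (r s))]
        calc (r s)^2 * |Real.exp (-(b s - a s)) - 1 + (b s - a s) - (b s - a s)^2/2|
            ≤ (r s)^2 * |b s - a s|^3 := by
              apply mul_le_mul_of_nonneg_left h1 (sq_nonneg _)
          _ = (r s * (b s - a s))^2 * |b s - a s| := by
              have e : |b s - a s|^3 = (b s - a s)^2 * |b s - a s| := by
                rw [← sq_abs]; ring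
              rw [e]; ring
      · have := ((hrd.mul hrd).mul hdabs)
        have h0 : Tendsto (fun s => (r s * (b s - a s)) * (r s * (b s - a s)) * |b s - a s|) l
            (𝓝 0) := by simpa using this
        apply h0.congr
        intro s; rw [sq]
    have heq : ∀ s, (r s)^2 * (Real.exp (-(b s - a s)) - 1 + (b s - a s))
        = (r s * (b s - a s)) * (r s * (b s - a s)) / 2
          + (r s)^2 * (Real.exp (-(b s - a s)) - 1 + (b s - a s) - (b s - a s)^2/2) := by
      intro s; ring
    have := hmain.add hrho
    rw [show (L*L/2 : ℝ) = L*L/2 + 0 by ring]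
    exact this.congr (fun s => (heq s).symm)
  -- Final assembly
  have heq : ∀ s, r s * (r s * (1 - Real.exp (a s - b s)) - L)
      = r s * (r s * (b s - a s) - L)
        - (r s)^2 * (Real.exp (-(b s - a s)) - 1 + (b s - a s)) := by
    intro s
    rw [show a s - b s = -(b s - a s) by ring]
    ring
  have hfin := hterm1.sub hterm2
  rw [show (-L^2/2 : ℝ) = 0 - L*L/2 by ring]
  exact hfin.congr (fun s => (heq s).symm)

lemma log_tail_upper {y : ℝ} (hy : 0 < y) :
    Real.log (gaussTail y) ≤ -y^2/2 - Real.log y := by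
  have h1 := mill_upper hy
  have h2 := Real.log_le_log (gaussTail_pos hy) h1
  rw [Real.log_div (Real.exp_ne_zero _) hy.ne', Real.log_exp] at h2
  linarith

lemma log_tail_lower {y : ℝ} (hy : 0 < y) :
    Real.log y - Real.log (1 + y^2) - y^2/2 ≤ Real.log (gaussTail y) := by
  have h0 : (0:ℝ) < y / (1 + y ^ 2) * Real.exp (-y ^ 2 / 2) := by positivity
  have h2 := Real.log_le_log h0 (mill_lower hy)
  rw [Real.log_mul (by positivity) (Real.exp_ne_zero _), Real.log_exp,
    Real.log_div hy.ne' (by positivity)] at h2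
  linarith

lemma log_one_add_sq {y : ℝ} (hy : 1 ≤ y) :
    Real.log (1 + y^2) - 2*Real.log y ≤ 1/y^2 := by
  have hy0 : (0:ℝ) < y := by linarith
  have h1 : Real.log (1 + y^2) - 2*Real.log y = Real.log ((1+y^2)/y^2) := by
    rw [Real.log_div (by positivity) (by positivity), Real.log_pow]
    push_cast; ring
  rw [h1]
  have h2 := Real.log_le_sub_one_of_pos (show (0:ℝ) < (1+y^2)/y^2 by positivity)
  have h3 : (1+y^2)/y^2 - 1 = 1/y^2 := by rw [add_div, div_self (by positivity)]; ring
  linarith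

/-- Second order condition for the standard lognormal quantile function
`G⁻¹(1−s) = e^{q(s)}`, where `q` is the standard normal upper quantile. -/
theorem lognormal_second_order
    (Φ : ℝ → ℝ)
    (hΦ : ∀ y : ℝ, Φ y = (2 * Real.pi) ^ (-(1/2) : ℝ) * ∫ t in Set.Iic y, Real.exp (-t ^ 2 / 2))
    (q : ℝ → ℝ)
    (hq : ∀ s ∈ Set.Ioo (0:ℝ) 1, Φ (q s) = 1 - s)
    (x : ℝ) (hx : 0 < x) :
    Tendsto (fun s => (2 * Real.log (1 / s)) ^ ((1:ℝ)/2) *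
        ((2 * Real.log (1 / s)) ^ ((1:ℝ)/2) * (Real.exp (q s) - Real.exp (q (x * s)))
            * Real.exp (-(q s)) - Real.log x))
      (𝓝[>] 0) (𝓝 (-(Real.log x) ^ 2 / 2)) := by
  have hF : ∀ s ∈ Set.Ioo (0:ℝ) 1, gaussTail (q s) = Real.sqrt (2 * Real.pi) * s :=
    fun s hs => tail_eq Φ hΦ q hq hs
  set l : Filter ℝ := 𝓝[>] (0:ℝ) with hl
  have hb : Tendsto q l atTop := q_tendsto q hF
  have hxs : Tendsto (fun s => x*s) l l := by
    apply tendsto_nhdsWithin_of_tendsto_nhds_of_eventually_within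
    · have h1 : Tendsto (fun s : ℝ => x*s) (𝓝 0) (𝓝 (x*0)) :=
        (continuous_const.mul continuous_id).tendsto 0
      rw [mul_zero] at h1
      exact h1.mono_left nhdsWithin_le_nhds
    · filter_upwards [self_mem_nhdsWithin] with s hs
      exact mul_pos hx hs
  have ha : Tendsto (fun s => q (x*s)) l atTop := hb.comp hxs
  have hmem1 : ∀ᶠ s in l, s ∈ Set.Ioo (0:ℝ) 1 :=
    Ioo_mem_nhdsGT_of_mem ⟨le_refl 0, one_pos⟩
  have hmem2 : ∀ᶠ s in l, x*s ∈ Set.Ioo (0:ℝ) 1 := hxs.eventually hmem1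
  have hb1 : ∀ᶠ s in l, 1 ≤ q s := hb.eventually (eventually_ge_atTop 1)
  have ha1 : ∀ᶠ s in l, 1 ≤ q (x*s) := ha.eventually (eventually_ge_atTop 1)
  have h2π : (0:ℝ) < 2*Real.pi := by positivity
  -- logs of tails
  have hlogdiff : ∀ᶠ s in l, Real.log (gaussTail (q (x*s))) - Real.log (gaussTail (q s))
      = Real.log x := by
    filter_upwards [hmem1, hmem2] with s hs1 hs2
    have hsqrt : Real.sqrt (2*Real.pi) ≠ 0 := by positivity
    rw [hF s hs1, hF (x*s) hs2, Real.log_mul hsqrt (mul_pos hx hs1.1).ne',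
      Real.log_mul hx.ne' hs1.1.ne', Real.log_mul hsqrt hs1.1.ne']
    ring
  have hab : ∀ᶠ s in l, |Real.log x - ((q s)^2 - (q (x*s))^2)/2
      - (Real.log (q s) - Real.log (q (x*s)))| ≤ 1/(q (x*s))^2 + 1/(q s)^2 := by
    filter_upwards [hb1, ha1, hlogdiff] with s hb1 ha1 hld
    have hbp : (0:ℝ) < q s := by linarith
    have hap : (0:ℝ) < q (x*s) := by linarith
    have u_a := log_tail_upper hap
    have l_a := log_tail_lower hap
    have u_b := log_tail_upper hbp
    have l_b := log_tail_lower hbp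
    have c_a := log_one_add_sq ha1
    have c_b := log_one_add_sq hb1
    rw [abs_le]
    constructor
    · nlinarith [u_a, l_b, c_a]
    · nlinarith [l_a, u_b, c_b]
  have hlr : ∀ᶠ s in l, |Real.log (q s) - Real.log (q (x*s))|
      ≤ |q s - q (x*s)| / min (q (x*s)) (q s) := by
    filter_upwards [hb1, ha1] with s hb1 ha1
    exact log_ratio_bound (by linarith) (by linarith)
  have hr : ∀ᶠ s in l, 0 ≤ (2 * Real.log (1 / s)) ^ ((1:ℝ)/2)
      ∧ (q s)^2 + 2*Real.log (q s) + Real.log (2*Real.pi)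
        ≤ ((2 * Real.log (1 / s)) ^ ((1:ℝ)/2))^2
      ∧ ((2 * Real.log (1 / s)) ^ ((1:ℝ)/2))^2
        ≤ (q s)^2 + 2*Real.log (q s) + Real.log (2*Real.pi) + 2/(q s)^2 := by
    filter_upwards [hmem1, hb1] with s hs1 hb1
    have hbp : (0:ℝ) < q s := by linarith
    have hspos := hs1.1
    have hlogs : 0 ≤ Real.log (1/s) := by
      rw [one_div, Real.log_inv]
      have := Real.log_nonpos hspos.le hs1.2.le
      linarith
    have hbase : (0:ℝ) ≤ 2 * Real.log (1/s) := by linarith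
    have hsq : ((2 * Real.log (1 / s)) ^ ((1:ℝ)/2))^2 = 2 * Real.log (1/s) := by
      rw [← Real.rpow_natCast ((2 * Real.log (1 / s)) ^ ((1:ℝ)/2)) 2,
        ← Real.rpow_mul hbase]
      norm_num
    have hkey : 2 * Real.log (1/s) = Real.log (2*Real.pi) - 2 * Real.log (gaussTail (q s)) := by
      have h1 : Real.log (gaussTail (q s)) = Real.log (Real.sqrt (2*Real.pi)) + Real.log s := by
        rw [hF s hs1, Real.log_mul (by positivity) hspos.ne']
      rw [one_div, Real.log_inv, h1, Real.log_sqrt h2π.le]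
      ring
    have u_b := log_tail_upper hbp
    have l_b := log_tail_lower hbp
    have c_b := log_one_add_sq hb1
    refine ⟨Real.rpow_nonneg hbase _, ?_, ?_⟩
    · rw [hsq, hkey]; nlinarith
    · rw [hsq, hkey]
      nlinarith [c_b, l_b, (by ring : (2:ℝ)/(q s)^2 = 2*(1/(q s)^2))]
  have hmain := main_calc (fun s => q (x*s)) q (fun s => (2 * Real.log (1 / s)) ^ ((1:ℝ)/2))
    (Real.log x) ha hb hab hlr hr
  have heq : ∀ s, (2 * Real.log (1 / s)) ^ ((1:ℝ)/2) *
      ((2 * Real.log (1 / s)) ^ ((1:ℝ)/2) * (Real.exp (q s) - Real.exp (q (x * s)))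
        * Real.exp (-(q s)) - Real.log x)
      = (2 * Real.log (1 / s)) ^ ((1:ℝ)/2) *
        ((2 * Real.log (1 / s)) ^ ((1:ℝ)/2) * (1 - Real.exp (q (x*s) - q s)) - Real.log x) := by
    intro s
    rw [Real.exp_neg, Real.exp_sub]
    have hne := Real.exp_ne_zero (q s)
    field_simp
  rw [show -(Real.log x) ^ 2 / 2 = -(Real.log x)^2/2 by ring]
  exact (hmain.congr (fun s => (heq s).symm))
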